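/- Let j ≥ 1 and s ≥ 0 be integers, let w be a word of length n over an alphabet Σ, let f : Σ → Σ be an involution and φ the induced antimorphic involution on words. Then w contains a factor of the form x^j φ(x) for some nonempty word x with |x| > s if and only if there exists an index i with 1 ≤ i ≤ n such that mp_s^j((w[1..i])^R) ≤ cmp_w[i]. -/

import Mathlib

open List

/-- `x^k`: concatenation of `k` copies of the word `x`. -/
def listPow {α : Type*} (x : List α) (k : ℕ) : List α := (List.replicate k x).flatten

/-- Minimal period `mp_s^k(u)` taking values in `ℕ∞`: the least `m > s` such that
the prefix of `u` of length `k*m` is the `k`-th power of the prefix of length `m`;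
`⊤` if no such `m` exists. -/
noncomputable def minPeriod {α : Type*} (k s : ℕ) (u : List α) : ℕ∞ :=
  sInf {N : ℕ∞ | ∃ m : ℕ, N = (m : ℕ∞) ∧ s < m ∧ k * m ≤ u.length ∧
    listPow (u.take m) k <+: u}

/-- Length of the longest common prefix of two words. -/
def lcpLen {α : Type*} [DecidableEq α] (a b : List α) : ℕ :=
  ((a.zip b).takeWhile fun p => decide (p.1 = p.2)).length

/-- The antimorphic involution on words induced by a letter map `f`. -/
def phi {α : Type*} (f : α → α) (u : List α) : List α := (u.map f).reverse

/-- Centralized maximal pseudo-palindrome array entry `cmp_w[i]`. -/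
noncomputable def cmpArr {α : Type*} (f : α → α) (w : List α) (i : ℕ) : ℕ :=
  sSup {m : ℕ | m ≤ min i (w.length - i) ∧
    phi f ((w.drop (i - m)).take m) = (w.drop i).take m}

theorem listPow_length {α : Type*} (x : List α) (k : ℕ) :
    (listPow x k).length = k * x.length := by
  simp [listPow]

theorem listPow_succ {α : Type*} (x : List α) (k : ℕ) :
    listPow x (k+1) = x ++ listPow x k := by
  simp [listPow, List.replicate_succ]

theorem listPow_succ' {α : Type*} (x : List α) (k : ℕ) :
    listPow x (k+1) = listPow x k ++ x := by
  induction k with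
  | zero => simp [listPow]
  | succ n ih => rw [listPow_succ x (n+1), ih, ← List.append_assoc, ← listPow_succ x n, ih]

theorem listPow_reverse {α : Type*} (x : List α) (k : ℕ) :
    (listPow x k).reverse = listPow x.reverse k := by
  induction k with
  | zero => simp [listPow]
  | succ n ih => rw [listPow_succ, List.reverse_append, ih, ← listPow_succ']

theorem phi_length {α : Type*} (f : α → α) (u : List α) : (phi f u).length = u.length := by
  simp [phi]

theorem phi_append {α : Type*} (f : α → α) (a b : List α) :
    phi f (a ++ b) = phi f b ++ phi f a := by
  simp [phi]

theorem stmt9 {α : Type*} (j s : ℕ) (hj : 1 ≤ j) (f : α → α)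
    (hf : Function.Involutive f) (w : List α) :
    (∃ x : List α, x ≠ [] ∧ s < x.length ∧ (listPow x j ++ phi f x) <:+: w) ↔
      (∃ i, 1 ≤ i ∧ i ≤ w.length ∧
        minPeriod j s ((w.take i).reverse) ≤ (cmpArr f w i : ℕ∞)) := by
  obtain ⟨j', rfl⟩ : ∃ j', j = j' + 1 := ⟨j - 1, by omega⟩
  constructor
  · rintro ⟨x, hx0, hxs, p, t, hw⟩
    have hm1 : 1 ≤ x.length := List.length_pos_iff.mpr hx0
    set m := x.length with hm
    set i := p.length + (j' + 1) * m with hi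
    have hsm' : (j' + 1) * m = j' * m + m := by ring
    have hjm : m ≤ (j' + 1) * m := by omega
    have hwlen : w.length = i + (m + t.length) := by
      rw [← hw]; simp [listPow_length, phi_length, ← hm]; omega
    have hin : i ≤ w.length := by omega
    have hi1 : 1 ≤ i := by omega
    refine ⟨i, hi1, hin, ?_⟩
    have hw2 : w = (p ++ listPow x (j' + 1)) ++ (phi f x ++ t) := by
      rw [← hw]; simp [List.append_assoc]
    have hlen2 : (p ++ listPow x (j' + 1)).length = i := by
      simp [listPow_length, hi, hm]
    have htake : w.take i = p ++ listPow x (j' + 1) := by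
      rw [hw2, List.take_left' hlen2]
    have hdrop : w.drop i = phi f x ++ t := by
      rw [hw2, List.drop_left' hlen2]
    have hu : (w.take i).reverse = listPow x.reverse (j' + 1) ++ p.reverse := by
      rw [htake, List.reverse_append, listPow_reverse]
    have hutake : ((w.take i).reverse).take m = x.reverse := by
      rw [hu, listPow_succ, List.append_assoc, List.take_left' (by simp [hm])]
    have h1 : minPeriod (j' + 1) s ((w.take i).reverse) ≤ (m : ℕ∞) := by
      apply sInf_le
      refine ⟨m, rfl, hxs, ?_, ?_⟩
      · rw [List.length_reverse, List.length_take]; omega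
      · rw [hutake, hu]; exact List.prefix_append _ _
    have hw3 : w = (p ++ listPow x j') ++ (x ++ (phi f x ++ t)) := by
      rw [hw2, listPow_succ']; simp [List.append_assoc]
    have hdropm : w.drop (i - m) = x ++ (phi f x ++ t) := by
      rw [hw3, List.drop_left' (by simp [listPow_length, ← hm]; omega)]
    have h2 : m ≤ cmpArr f w i := by
      apply le_csSup ⟨min i (w.length - i), fun y hy => hy.1⟩
      refine ⟨by omega, ?_⟩
      rw [hdrop, hdropm, List.take_left' rfl, List.take_left' (by rw [phi_length])]
    exact le_trans h1 (by exact_mod_cast h2)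
  · rintro ⟨i, hi1, hin, hle⟩
    have hMS : cmpArr f w i ∈ {m : ℕ | m ≤ min i (w.length - i) ∧
        phi f ((w.drop (i - m)).take m) = (w.drop i).take m} :=
      Nat.sSup_mem ⟨0, by simp [phi]⟩ ⟨min i (w.length - i), fun y hy => hy.1⟩
    set M := cmpArr f w i with hM
    obtain ⟨hMle, hMeq⟩ := hMS
    have hlt : minPeriod (j' + 1) s ((w.take i).reverse) < ((M : ℕ∞) + 1) := by
      refine lt_of_le_of_lt hle ?_
      exact_mod_cast Nat.lt_succ_self M
    obtain ⟨N, hNmem, hNlt⟩ := sInf_lt_iff.mp hlt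
    obtain ⟨m, rfl, hsm, hjm, hpre⟩ := hNmem
    have hmM : m ≤ M := by
      have h : (m : ℕ∞) < ((M + 1 : ℕ) : ℕ∞) := by exact_mod_cast hNlt
      exact Nat.lt_succ_iff.mp (by exact_mod_cast h)
    have hulen : ((w.take i).reverse).length = i := by
      rw [List.length_reverse, List.length_take]; omega
    rw [hulen] at hjm
    have hsm' : (j' + 1) * m = j' * m + m := by ring
    have hmi : m ≤ i := by omega
    have hmni : m ≤ w.length - i := le_trans hmM (le_trans hMle (min_le_right _ _))
    have hMi : M ≤ i := le_trans hMle (min_le_left _ _)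
    set y := (w.drop (i - m)).take m with hy
    have hylen : y.length = m := by
      rw [hy, List.length_take, List.length_drop]; omega
    have hut : ((w.take i).reverse).take m = y.reverse := by
      rw [List.take_reverse, List.length_take, min_eq_left hin, List.drop_take]
      have h1 : i - (i - m) = m := by omega
      rw [h1]
    have hsuf : listPow y (j' + 1) <:+ w.take i := by
      have := hpre
      rw [hut, ← listPow_reverse] at this
      exact List.reverse_prefix.mp this
    have hsplit : (w.drop (i - M)).take M =
        ((w.drop (i - M)).take M).take (M - m) ++ y := by
      conv_lhs => rw [← List.take_append_drop (M - m) ((w.drop (i - M)).take M)]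
      congr 1
      rw [List.drop_take, List.drop_drop]
      have h1 : M - (M - m) = m := by omega
      have h2 : i - M + (M - m) = i - m := by omega
      rw [h1, h2]
    have hym : phi f y = (w.drop i).take m := by
      have h3 := hMeq
      rw [hsplit, phi_append] at h3
      have h4 := congrArg (List.take m) h3
      rw [List.take_left' (by rw [phi_length, hylen]), List.take_take,
        min_eq_left hmM] at h4
      exact h4
    obtain ⟨q, hq⟩ := hsuf
    refine ⟨y, ?_, ?_, ⟨q, (w.drop i).drop m, ?_⟩⟩
    · intro h; rw [h] at hylen; simp at hylen; omega
    · rw [hylen]; exact hsm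
    · calc q ++ (listPow y (j' + 1) ++ phi f y) ++ (w.drop i).drop m
          = (q ++ listPow y (j' + 1)) ++ (phi f y ++ (w.drop i).drop m) := by
            simp [List.append_assoc]
        _ = w.take i ++ ((w.drop i).take m ++ (w.drop i).drop m) := by rw [hq, hym]
        _ = w := by rw [List.take_append_drop, List.take_append_drop]
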